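/- Fix a user k and an integer g with 2 ≤ g ≤ C(H-1,r-1)+1. The number of (g-1)-subsets W of the user set with k ∈ W and W ⊆ 𝒰_h for some relay h ∈ k equals S₂(g) := Σ_{a=1}^{r} (-1)^{a-1} C(r,a) C(K_a - 1, g-2), where K_a = C(H-a, r-a). -/
import Mathlib


open Finset

private lemma inf'_filter_eq {α β : Type*} [DecidableEq β] (t : Finset α) (ht : t.Nonempty)
    (B : Finset β) (P : α → β → Prop) [∀ a b, Decidable (P a b)] :
    t.inf' ht (fun a => B.filter (P a)) = B.filter (fun b => ∀ a ∈ t, P a b) := by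
  induction ht using Finset.Nonempty.cons_induction with
  | singleton a => simp
  | cons a s ha hs ih =>
      rw [Finset.inf'_cons (H := hs), ih]
      ext b
      simp only [Finset.inf_eq_inter, Finset.mem_inter, Finset.mem_filter, Finset.mem_cons]
      constructor
      · rintro ⟨⟨hb, hPa⟩, _, hPs⟩
        exact ⟨hb, by rintro x (rfl | hx); exacts [hPa, hPs x hx]⟩
      · rintro ⟨hb, hP⟩
        exact ⟨⟨hb, hP a (Or.inl rfl)⟩, hb, fun x hx => hP x (Or.inr hx)⟩

/-- Number of `r`-subsets of `Fin H` containing a fixed set `A`. -/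
private lemma card_supersets {H r : ℕ} (A : Finset (Fin H)) (hA : A.card ≤ r) :
    (((Finset.univ : Finset (Fin H)).powersetCard r).filter (fun u => A ⊆ u)).card
      = Nat.choose (H - A.card) (r - A.card) := by
  have : (((Finset.univ : Finset (Fin H)).powersetCard r).filter (fun u => A ⊆ u)).card
      = (Aᶜ.powersetCard (r - A.card)).card := by
    refine Finset.card_bij' (fun u _ => u \ A) (fun v _ => v ∪ A) ?_ ?_ ?_ ?_
    · intro u hu
      simp only [Finset.mem_filter, Finset.mem_powersetCard] at hu
      obtain ⟨⟨-, hcard⟩, hAu⟩ := hu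
      rw [Finset.mem_powersetCard]
      constructor
      · intro x hx
        simp only [Finset.mem_sdiff] at hx
        simp [Finset.mem_compl, hx.2]
      · rw [Finset.card_sdiff_of_subset hAu, hcard]
    · intro v hv
      rw [Finset.mem_powersetCard] at hv
      obtain ⟨hsub, hcard⟩ := hv
      have hdisj : Disjoint v A := by
        rw [Finset.disjoint_left]
        intro x hx hxA
        have := hsub hx
        simp [Finset.mem_compl, hxA] at this
      simp only [Finset.mem_filter, Finset.mem_powersetCard]
      refine ⟨⟨Finset.subset_univ _, ?_⟩, Finset.subset_union_right⟩
      rw [Finset.card_union_of_disjoint hdisj, hcard]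
      omega
    · intro u hu
      simp only [Finset.mem_filter] at hu
      exact Finset.sdiff_union_of_subset hu.2
    · intro v hv
      rw [Finset.mem_powersetCard] at hv
      have hdisj : Disjoint v A := by
        rw [Finset.disjoint_left]
        intro x hx hxA
        have := hv.1 hx
        simp [Finset.mem_compl, hxA] at this
      show (v ∪ A) \ A = v
      rw [Finset.union_sdiff_right, Finset.sdiff_eq_self_of_disjoint hdisj]
  rw [this, Finset.card_powersetCard, Finset.card_compl, Fintype.card_fin]

/-- Number of `(g-1)`-subsets `W` of the users with `k ∈ W` and every member of `W`
containing the fixed relay set `A ⊆ k`. -/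
private lemma card_inter_family {H r g : ℕ} (hg2 : 2 ≤ g) (k A : Finset (Fin H))
    (hkr : k.card = r) (hA : A ⊆ k) :
    (((((Finset.univ : Finset (Fin H)).powersetCard r).powersetCard (g - 1)).filter
        (fun W => k ∈ W ∧ ∀ u ∈ W, A ⊆ u)).card)
      = Nat.choose (Nat.choose (H - A.card) (r - A.card) - 1) (g - 2) := by
  set T := ((Finset.univ : Finset (Fin H)).powersetCard r).filter (fun u => A ⊆ u) with hT
  have hkT : k ∈ T := by
    simp only [hT, Finset.mem_filter, Finset.mem_powersetCard]
    exact ⟨⟨Finset.subset_univ _, hkr⟩, hA⟩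
  have key : ((((Finset.univ : Finset (Fin H)).powersetCard r).powersetCard (g - 1)).filter
        (fun W => k ∈ W ∧ ∀ u ∈ W, A ⊆ u)).card
      = ((T.erase k).powersetCard (g - 2)).card := by
    refine Finset.card_bij' (fun W _ => W.erase k) (fun V _ => insert k V) ?_ ?_ ?_ ?_
    · intro W hW
      simp only [Finset.mem_filter, Finset.mem_powersetCard] at hW
      obtain ⟨⟨hWsub, hWcard⟩, hkW, hall⟩ := hW
      rw [Finset.mem_powersetCard]
      constructor
      · intro u hu
        rw [Finset.mem_erase] at hu ⊢
        refine ⟨hu.1, ?_⟩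
        simp only [hT, Finset.mem_filter]
        exact ⟨hWsub hu.2, hall u hu.2⟩
      · rw [Finset.card_erase_of_mem hkW, hWcard]; omega
    · intro V hV
      rw [Finset.mem_powersetCard] at hV
      obtain ⟨hVsub, hVcard⟩ := hV
      have hkV : k ∉ V := fun h => (Finset.mem_erase.1 (hVsub h)).1 rfl
      have hVT : V ⊆ T := hVsub.trans (Finset.erase_subset _ _)
      simp only [Finset.mem_filter, Finset.mem_powersetCard]
      refine ⟨⟨?_, ?_⟩, Finset.mem_insert_self _ _, ?_⟩
      · intro u hu
        rcases Finset.mem_insert.1 hu with rfl | hu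
        · exact (Finset.mem_filter.1 hkT).1
        · exact (Finset.mem_filter.1 (hVT hu)).1
      · rw [Finset.card_insert_of_notMem hkV, hVcard]; omega
      · intro u hu
        rcases Finset.mem_insert.1 hu with rfl | hu
        · exact hA
        · exact (Finset.mem_filter.1 (hVT hu)).2
    · intro W hW
      simp only [Finset.mem_filter] at hW
      exact Finset.insert_erase hW.2.1
    · intro V hV
      rw [Finset.mem_powersetCard] at hV
      have hkV : k ∉ V := fun h => (Finset.mem_erase.1 (hV.1 h)).1 rfl
      exact Finset.erase_insert hkV
  rw [key, Finset.card_powersetCard, Finset.card_erase_of_mem hkT,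
    card_supersets A (hkr ▸ Finset.card_le_card hA)]

/-- Fix a user `k` and `2 ≤ g ≤ C(H-1,r-1)+1`. The number of `(g-1)`-subsets `W` of the user
set with `k ∈ W` and `W ⊆ 𝒰_h` for some relay `h ∈ k` equals
`S₂(g) = Σ_{a=1}^r (-1)^{a-1} C(r,a) C(K_a - 1, g-2)` with `K_a = C(H-a,r-a)`. -/
theorem card_S2 (H r g : ℕ) (hr : 1 ≤ r) (hH : r ≤ H)
    (hg2 : 2 ≤ g) (hg : g ≤ Nat.choose (H - 1) (r - 1) + 1)
    (k : Finset (Fin H)) (hk : k ∈ (Finset.univ : Finset (Fin H)).powersetCard r) :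
    (((((Finset.univ : Finset (Fin H)).powersetCard r).powersetCard (g - 1)).filter
        (fun W => k ∈ W ∧ ∃ h ∈ k, ∀ u ∈ W, h ∈ u)).card : ℤ)
      = ∑ a ∈ Finset.Icc 1 r, (-1 : ℤ) ^ (a - 1) * (Nat.choose r a)
          * (Nat.choose (Nat.choose (H - a) (r - a) - 1) (g - 2)) := by
  classical
  have hkr : k.card = r := (Finset.mem_powersetCard.1 hk).2
  set B := (((Finset.univ : Finset (Fin H)).powersetCard r).powersetCard (g - 1)) with hB
  set S : Fin H → Finset (Finset (Finset (Fin H))) :=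
    fun h => B.filter (fun W => k ∈ W ∧ ∀ u ∈ W, h ∈ u) with hS
  have hunion : B.filter (fun W => k ∈ W ∧ ∃ h ∈ k, ∀ u ∈ W, h ∈ u) = k.biUnion S := by
    ext W
    simp only [Finset.mem_filter, Finset.mem_biUnion, hS]
    tauto
  rw [hunion, Finset.inclusion_exclusion_card_biUnion]
  -- compute each intersection
  have hinf : ∀ (t : Finset (Fin H)) (ht : t.Nonempty), t ⊆ k →
      ((t.inf' ht S).card : ℤ)
        = (Nat.choose (Nat.choose (H - t.card) (r - t.card) - 1) (g - 2) : ℤ) := by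
    intro t ht htk
    have : t.inf' ht S = B.filter (fun W => k ∈ W ∧ ∀ u ∈ W, t ⊆ u) := by
      rw [hS, inf'_filter_eq]
      ext W
      simp only [Finset.mem_filter]
      constructor
      · rintro ⟨hWB, hall⟩
        obtain ⟨a, ha⟩ := ht
        refine ⟨hWB, (hall a ha).1, fun u hu x hx => (hall x hx).2 u hu⟩
      · rintro ⟨hWB, hkW, hall⟩
        exact ⟨hWB, fun a ha => ⟨hkW, fun u hu => hall u hu ha⟩⟩
    rw [this, hB, card_inter_family hg2 k t hkr htk]
  calc (∑ t : (k.powerset.filter (·.Nonempty)),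
        (-1 : ℤ) ^ (t.1.card + 1) * ((t.1.inf' (Finset.mem_filter.1 t.2).2 S).card : ℤ))
      = ∑ t ∈ k.powerset.filter (·.Nonempty), (-1 : ℤ) ^ (t.card + 1)
          * (Nat.choose (Nat.choose (H - t.card) (r - t.card) - 1) (g - 2) : ℤ) := by
        rw [← Finset.sum_attach (k.powerset.filter (·.Nonempty))
          (fun t => (-1 : ℤ) ^ (t.card + 1)
            * (Nat.choose (Nat.choose (H - t.card) (r - t.card) - 1) (g - 2) : ℤ))]
        refine Finset.sum_congr rfl fun t _ => ?_
        have ht2 := Finset.mem_filter.1 t.2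
        rw [hinf t.1 ht2.2 (Finset.mem_powerset.1 ht2.1)]
    _ = ∑ a ∈ Finset.Icc 1 r, ∑ t ∈ k.powersetCard a, (-1 : ℤ) ^ (t.card + 1)
          * (Nat.choose (Nat.choose (H - t.card) (r - t.card) - 1) (g - 2) : ℤ) := by
        rw [← Finset.sum_biUnion]
        · apply Finset.sum_congr _ (fun _ _ => rfl)
          ext t
          simp only [Finset.mem_biUnion, Finset.mem_Icc, Finset.mem_powersetCard,
            Finset.mem_filter, Finset.mem_powerset]
          constructor
          · rintro ⟨htk, hne⟩
            refine ⟨t.card, ⟨Finset.card_pos.2 hne, hkr ▸ Finset.card_le_card htk⟩, htk, rfl⟩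
          · rintro ⟨a, ⟨ha1, _⟩, htk, rfl⟩
            exact ⟨htk, Finset.card_pos.1 ha1⟩
        · intro x _ y _ hxy
          exact k.pairwise_disjoint_powersetCard hxy
    _ = ∑ a ∈ Finset.Icc 1 r, (-1 : ℤ) ^ (a - 1) * (Nat.choose r a)
          * (Nat.choose (Nat.choose (H - a) (r - a) - 1) (g - 2)) := by
        refine Finset.sum_congr rfl fun a ha => ?_
        rw [Finset.mem_Icc] at ha
        have : ∀ t ∈ k.powersetCard a, (-1 : ℤ) ^ (t.card + 1)
            * (Nat.choose (Nat.choose (H - t.card) (r - t.card) - 1) (g - 2) : ℤ)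
            = (-1 : ℤ) ^ (a - 1)
              * (Nat.choose (Nat.choose (H - a) (r - a) - 1) (g - 2) : ℤ) := by
          intro t ht
          have hcard : t.card = a := (Finset.mem_powersetCard.1 ht).2
          have hexp : a + 1 = (a - 1) + 2 := by omega
          rw [hcard, hexp, pow_add]
          ring
        rw [Finset.sum_congr rfl this, Finset.sum_const, Finset.card_powersetCard, hkr]
        push_cast
        ring
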